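/- If n ≥ 1 is a non-negative integer linear combination of lower Wythoff numbers each at least m, then n can be written as a sum of one or two lower Wythoff numbers each at least m. -/

import Mathlib

noncomputable def phi : ℝ := (1 + Real.sqrt 5) / 2

/-- A lower Wythoff number: a number of the form `⌊k·φ⌋` for `k ≥ 1`. -/
def IsLowerWythoff (x : ℕ) : Prop := ∃ k : ℕ, 1 ≤ k ∧ x = ⌊(k : ℝ) * phi⌋₊

lemma phi_eq_gold : phi = Real.goldenRatio := rfl

lemma phi_sq : phi ^ 2 = phi + 1 := by rw [phi_eq_gold]; exact Real.goldenRatio_sq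

lemma phi_gt : (1.61 : ℝ) < phi := by
  have h5 : Real.sqrt 5 ^ 2 = 5 := Real.sq_sqrt (by norm_num)
  have hpos : 0 ≤ Real.sqrt 5 := Real.sqrt_nonneg 5
  have : (2.23 : ℝ) < Real.sqrt 5 := by nlinarith
  unfold phi; linarith

lemma phi_lt : phi < (1.62 : ℝ) := by
  have h5 : Real.sqrt 5 ^ 2 = 5 := Real.sq_sqrt (by norm_num)
  have hpos : 0 ≤ Real.sqrt 5 := Real.sqrt_nonneg 5
  have : Real.sqrt 5 < (2.24 : ℝ) := by nlinarith
  unfold phi; linarith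

lemma phi_irr : Irrational phi := by rw [phi_eq_gold]; exact Real.goldenRatio_irrational

lemma not_int (q : ℕ) (hq : 1 ≤ q) (z : ℤ) : (q : ℝ) * phi ≠ (z : ℝ) :=
  (phi_irr.natCast_mul (by omega)).ne_int z

noncomputable def fr (p : ℕ) : ℝ := Int.fract ((p : ℝ) * phi)

lemma fr_nonneg (p : ℕ) : 0 ≤ fr p := Int.fract_nonneg _

lemma fr_lt_one (p : ℕ) : fr p < 1 := Int.fract_lt_one _

lemma fr_pos (p : ℕ) (hp : 1 ≤ p) : 0 < fr p := by
  rcases lt_or_eq_of_le (fr_nonneg p) with h | h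
  · exact h
  · exfalso
    apply not_int p hp ⌊(p : ℝ) * phi⌋
    have h2 := Int.self_sub_floor ((p : ℝ) * phi)
    unfold fr at h
    linarith

lemma floor_repr (p : ℕ) : ((⌊(p : ℝ) * phi⌋₊ : ℕ) : ℝ) = (p : ℝ) * phi - fr p := by
  have h0 : (0 : ℝ) ≤ (p : ℝ) * phi := by
    have := phi_gt; positivity
  rw [natCast_floor_eq_intCast_floor h0]
  unfold fr
  rw [Int.self_sub_fract]

lemma floor_mono' {p q : ℕ} (h : p ≤ q) : ⌊(p : ℝ) * phi⌋₊ ≤ ⌊(q : ℝ) * phi⌋₊ := by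
  apply Nat.floor_le_floor
  have hphi : (0:ℝ) ≤ phi := by linarith [phi_gt]
  exact mul_le_mul_of_nonneg_right (by exact_mod_cast h) hphi

lemma make (q n : ℕ) (h1 : (n : ℝ) ≤ (q : ℝ) * phi)
    (h2 : (q : ℝ) * phi < (n : ℝ) + 1) : n = ⌊(q : ℝ) * phi⌋₊ := by
  symm
  rw [Nat.floor_eq_iff (le_trans (Nat.cast_nonneg n) h1)]
  exact ⟨h1, h2⟩

lemma fr_succ_lo (p : ℕ) (h : fr p < 2 - phi) : fr (p + 1) = fr p + (phi - 1) := by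
  have hs := Int.self_sub_floor ((p : ℝ) * phi)
  have hc : ((p + 1 : ℕ) : ℝ) * phi = ((⌊(p:ℝ)*phi⌋ : ℝ) + (Int.fract ((p:ℝ)*phi) + (phi - 1))) + 1 := by
    push_cast
    linear_combination hs
  unfold fr at h ⊢
  rw [hc, Int.fract_add_one, Int.fract_intCast_add]
  exact Int.fract_eq_self.mpr ⟨by have := Int.fract_nonneg ((p:ℝ)*phi); have := phi_gt; linarith,
    by have := phi_gt; linarith⟩

lemma fr_succ_hi (p : ℕ) (h : 2 - phi ≤ fr p) : fr (p + 1) = fr p - (2 - phi) := by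
  have hs := Int.self_sub_floor ((p : ℝ) * phi)
  have hc : ((p + 1 : ℕ) : ℝ) * phi = (((⌊(p:ℝ)*phi⌋ + 1 : ℤ) : ℝ) + (Int.fract ((p:ℝ)*phi) - (2 - phi))) + 1 := by
    push_cast
    linear_combination hs
  unfold fr at h ⊢
  rw [hc, Int.fract_add_one, Int.fract_intCast_add]
  exact Int.fract_eq_self.mpr ⟨by linarith,
    by have := Int.fract_lt_one ((p:ℝ)*phi); have := phi_lt; linarith⟩

lemma floor_phi : ⌊phi⌋ = 1 := by
  rw [Int.floor_eq_iff]
  constructor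
  · push_cast; linarith [phi_gt]
  · push_cast; linarith [phi_lt]

lemma fr_one : fr 1 = phi - 1 := by
  unfold fr
  rw [← Int.self_sub_floor, Nat.cast_one, one_mul, floor_phi]
  norm_num

lemma floor_two_phi : ⌊(2:ℝ) * phi⌋ = 3 := by
  rw [Int.floor_eq_iff]
  constructor
  · push_cast; linarith [phi_gt]
  · push_cast; linarith [phi_lt]

lemma fr_two : fr 2 = 2 * phi - 3 := by
  unfold fr
  rw [← Int.self_sub_floor, show ((2:ℕ):ℝ) = (2:ℝ) by norm_num, floor_two_phi]
  norm_num

lemma idx3 (t : ℕ) (ht : 1 ≤ t) (h : phi - 1 < fr t) : 3 ≤ t := by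
  by_contra hc
  push_neg at hc
  interval_cases t
  · rw [fr_one] at h; linarith
  · rw [fr_two] at h; linarith [phi_lt]

lemma arc (p0 : ℕ) (l u : ℝ) (h0 : 0 ≤ l) (h1 : u ≤ 1) (hlen : 2 - phi < u - l) :
    ∃ p : ℕ, p0 ≤ p ∧ p ≤ p0 + 2 ∧ l < fr p ∧ fr p < u := by
  have hg := phi_gt
  have hl2 := phi_lt
  have x0 : 0 ≤ fr p0 := fr_nonneg p0
  have x1 : fr p0 < 1 := fr_lt_one p0
  rcases lt_or_ge l (fr p0) with hxl | hxl
  · rcases lt_or_ge (fr p0) u with hxu | hxu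
    · exact ⟨p0, le_refl _, by omega, hxl, hxu⟩
    · -- fr p0 ≥ u
      have hx2 : fr (p0 + 1) = fr p0 - (2 - phi) := fr_succ_hi p0 (by linarith)
      rcases lt_or_ge (fr (p0 + 1)) u with h2u | h2u
      · exact ⟨p0 + 1, by omega, by omega, by rw [hx2]; linarith, h2u⟩
      · have hx3 : fr (p0 + 2) = fr p0 - 2 * (2 - phi) := by
          rw [show p0 + 2 = (p0 + 1) + 1 from rfl,
            fr_succ_hi (p0 + 1) (by rw [hx2]; linarith), hx2]; ring
        exact ⟨p0 + 2, by omega, le_refl _, by rw [hx3]; linarith, by rw [hx3]; linarith⟩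
  · rcases lt_or_ge (fr p0) (2 - phi) with hsm | hsm
    · have hx2 : fr (p0 + 1) = fr p0 + (phi - 1) := fr_succ_lo p0 hsm
      rcases lt_or_ge (fr (p0 + 1)) u with h2u | h2u
      · exact ⟨p0 + 1, by omega, by omega, by rw [hx2]; linarith, h2u⟩
      · have hx3 : fr (p0 + 2) = fr p0 + (phi - 1) - (2 - phi) := by
          rw [show p0 + 2 = (p0 + 1) + 1 from rfl,
            fr_succ_hi (p0 + 1) (by rw [hx2]; linarith), hx2]
        exact ⟨p0 + 2, by omega, le_refl _, by rw [hx3]; linarith, by rw [hx3]; linarith⟩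
    · have hx2 : fr (p0 + 1) = fr p0 - (2 - phi) := fr_succ_hi p0 hsm
      have hx3 : fr (p0 + 2) = fr p0 - (2 - phi) + (phi - 1) := by
        rw [show p0 + 2 = (p0 + 1) + 1 from rfl,
          fr_succ_lo (p0 + 1) (by rw [hx2]; linarith), hx2]
      exact ⟨p0 + 2, by omega, le_refl _, by rw [hx3]; linarith, by rw [hx3]; linarith⟩

lemma pair_floor (i j : ℕ) (hlt : fr i + fr j < 1) :
    ⌊(i:ℝ)*phi⌋₊ + ⌊(j:ℝ)*phi⌋₊ = ⌊((i+j : ℕ):ℝ)*phi⌋₊ := by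
  have hri := floor_repr i
  have hrj := floor_repr j
  have h0i := fr_nonneg i
  have h0j := fr_nonneg j
  have hsum : ((i:ℝ)+(j:ℝ))*phi = (i:ℝ)*phi + (j:ℝ)*phi := by ring
  apply make
  · push_cast
    linarith
  · push_cast
    linarith

lemma core (m n i j k : ℕ) (hi : 1 ≤ i) (hij : i ≤ j) (hjk : j ≤ k)
    (hma : m ≤ ⌊(i:ℝ)*phi⌋₊) (hmb : m ≤ ⌊(j:ℝ)*phi⌋₊) (hmc : m ≤ ⌊(k:ℝ)*phi⌋₊)
    (hn : n = ⌊(i:ℝ)*phi⌋₊ + ⌊(j:ℝ)*phi⌋₊ + ⌊(k:ℝ)*phi⌋₊) :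
    (∃ a, IsLowerWythoff a ∧ m ≤ a ∧ n = a) ∨
    (∃ a b, IsLowerWythoff a ∧ IsLowerWythoff b ∧ m ≤ a ∧ m ≤ b ∧ n = a + b) := by
  have hj : 1 ≤ j := le_trans hi hij
  have hk : 1 ≤ k := le_trans hj hjk
  have hg := phi_gt
  have hl := phi_lt
  have hri := floor_repr i
  have hrj := floor_repr j
  have hrk := floor_repr k
  have h0i := fr_pos i hi
  have h0j := fr_pos j hj
  have h0k := fr_pos k hk
  have h1i := fr_lt_one i
  have h1j := fr_lt_one j
  have h1k := fr_lt_one k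
  rcases lt_or_ge (fr i + fr j) 1 with hij1 | hij1
  · exact Or.inr ⟨⌊(i:ℝ)*phi⌋₊ + ⌊(j:ℝ)*phi⌋₊, ⌊(k:ℝ)*phi⌋₊,
      ⟨i+j, by omega, pair_floor i j hij1⟩, ⟨k, hk, rfl⟩, by omega, hmc, by omega⟩
  rcases lt_or_ge (fr i + fr k) 1 with hik1 | hik1
  · exact Or.inr ⟨⌊(i:ℝ)*phi⌋₊ + ⌊(k:ℝ)*phi⌋₊, ⌊(j:ℝ)*phi⌋₊,
      ⟨i+k, by omega, pair_floor i k hik1⟩, ⟨j, hj, rfl⟩, by omega, hmb, by omega⟩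
  rcases lt_or_ge (fr j + fr k) 1 with hjk1 | hjk1
  · exact Or.inr ⟨⌊(i:ℝ)*phi⌋₊, ⌊(j:ℝ)*phi⌋₊ + ⌊(k:ℝ)*phi⌋₊,
      ⟨i, hi, rfl⟩, ⟨j+k, by omega, pair_floor j k hjk1⟩, hma, by omega, by omega⟩
  -- all pair fractional sums ≥ 1
  have hnc : (n:ℝ) = (i:ℝ)*phi - fr i + ((j:ℝ)*phi - fr j) + ((k:ℝ)*phi - fr k) := by
    have h := congrArg (Nat.cast : ℕ → ℝ) hn
    push_cast at h
    rw [hri, hrj, hrk] at h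
    exact h
  have hsphi : fr i + fr j + fr k ≠ phi := by
    intro he
    apply not_int (i+j+k-1) (by omega) (n:ℤ)
    rw [Nat.cast_sub (by omega : 1 ≤ i+j+k)]
    push_cast
    linear_combination he - hnc
  have hsphi1 : fr i + fr j + fr k ≠ phi + 1 := by
    intro he
    apply not_int (i+j+k-1) (by omega) ((n:ℤ)+1)
    rw [Nat.cast_sub (by omega : 1 ≤ i+j+k)]
    push_cast
    linear_combination he - hnc
  rcases lt_or_ge (fr i + fr j + fr k) phi with hsA | hsge
  · -- Case A : 1 < s < phi, pair construction with N' = i+j+k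
    have hj2 : 2 ≤ j := by
      by_contra hc2
      have hij' : i = 1 ∧ j = 1 := by omega
      obtain ⟨rfl, rfl⟩ := hij'
      have hf1 : fr 1 = phi - 1 := fr_one
      linarith
    have hk2 : 2 ≤ k := le_trans hj2 hjk
    obtain ⟨p, hip, hp2, hpl, hpu⟩ := arc i (fr i + fr j + fr k - 1) 1
      (by linarith) le_rfl (by linarith)
    have hp1 : 1 ≤ p := le_trans hi hip
    have hqd : p ≤ i + j + k := by omega
    set q := i + j + k - p with hqdef
    have hjq : j ≤ q := by omega
    have hq1 : 1 ≤ q := by omega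
    have hqr : (q:ℝ) = (i:ℝ)+(j:ℝ)+(k:ℝ)-(p:ℝ) := by
      rw [hqdef, Nat.cast_sub hqd]
      push_cast
      ring
    have hrp := floor_repr p
    have hrq := floor_repr q
    have hfq : fr q = fr i + fr j + fr k - fr p := by
      have hqphi : (q:ℝ)*phi =
          (((n:ℤ) - (⌊(p:ℝ)*phi⌋₊:ℤ)) : ℤ) + (fr i + fr j + fr k - fr p) := by
        push_cast
        linear_combination phi * hqr - hnc + hrp
      unfold fr
      rw [hqphi, Int.fract_intCast_add]
      exact Int.fract_eq_self.mpr ⟨by linarith [fr_lt_one p], by linarith⟩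
    have hwv : n = ⌊(p:ℝ)*phi⌋₊ + ⌊(q:ℝ)*phi⌋₊ := by
      have h2 : (n:ℝ) = (⌊(p:ℝ)*phi⌋₊:ℝ) + (⌊(q:ℝ)*phi⌋₊:ℝ) := by
        rw [hrp, hrq, hfq]
        linear_combination hnc - phi * hqr
      exact_mod_cast h2
    exact Or.inr ⟨⌊(p:ℝ)*phi⌋₊, ⌊(q:ℝ)*phi⌋₊, ⟨p, hp1, rfl⟩, ⟨q, hq1, rfl⟩,
      le_trans hma (floor_mono' hip), le_trans hmb (floor_mono' hjq), hwv⟩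
  have hsgt : phi < fr i + fr j + fr k := lt_of_le_of_ne hsge (Ne.symm hsphi)
  rcases lt_or_ge (fr i + fr j + fr k) (phi + 1) with hsB | hsge1
  · -- Case B : phi < s < phi + 1, single number
    have hN1 : ((i+j+k-1:ℕ):ℝ) = (i:ℝ)+(j:ℝ)+(k:ℝ)-1 := by
      rw [Nat.cast_sub (by omega : 1 ≤ i+j+k)]
      push_cast
      ring
    have hexp : ((i:ℝ)+(j:ℝ)+(k:ℝ)-1)*phi
        = (i:ℝ)*phi + (j:ℝ)*phi + (k:ℝ)*phi - phi := by ring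
    have heq : n = ⌊((i+j+k-1:ℕ):ℝ)*phi⌋₊ := by
      apply make
      · rw [hN1, hexp]; linarith
      · rw [hN1, hexp]; linarith
    exact Or.inl ⟨n, ⟨i+j+k-1, by omega, heq⟩, by omega, rfl⟩
  · -- Case C : s > phi + 1
    have hsgt1 : phi + 1 < fr i + fr j + fr k := lt_of_le_of_ne hsge1 (Ne.symm hsphi1)
    have hfj : phi - 1 < fr j := by linarith
    have hfk : phi - 1 < fr k := by linarith
    have hj3 : 3 ≤ j := idx3 j hj hfj
    have hk3 : 3 ≤ k := idx3 k hk hfk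
    obtain ⟨p, hip, hp2, hpl, hpu⟩ := arc i (fr i + fr j + fr k - phi - 1) 1
      (by linarith) le_rfl (by linarith)
    have hp1 : 1 ≤ p := le_trans hi hip
    have hqd : p ≤ i + j + k - 1 := by omega
    set q := i + j + k - 1 - p with hqdef
    have hjq : j ≤ q := by omega
    have hq1 : 1 ≤ q := by omega
    have hqr : (q:ℝ) = (i:ℝ)+(j:ℝ)+(k:ℝ)-1-(p:ℝ) := by
      rw [hqdef, Nat.cast_sub hqd, Nat.cast_sub (by omega : 1 ≤ i+j+k)]
      push_cast
      ring
    have hrp := floor_repr p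
    have hrq := floor_repr q
    have hfq : fr q = fr i + fr j + fr k - phi - fr p := by
      have hqphi : (q:ℝ)*phi =
          (((n:ℤ) - (⌊(p:ℝ)*phi⌋₊:ℤ)) : ℤ) + (fr i + fr j + fr k - phi - fr p) := by
        push_cast
        linear_combination phi * hqr - hnc + hrp
      unfold fr
      rw [hqphi, Int.fract_intCast_add]
      exact Int.fract_eq_self.mpr ⟨by linarith [fr_lt_one p], by linarith⟩
    have hwv : n = ⌊(p:ℝ)*phi⌋₊ + ⌊(q:ℝ)*phi⌋₊ := by
      have h2 : (n:ℝ) = (⌊(p:ℝ)*phi⌋₊:ℝ) + (⌊(q:ℝ)*phi⌋₊:ℝ) := by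
        rw [hrp, hrq, hfq]
        linear_combination hnc - phi * hqr
      exact_mod_cast h2
    exact Or.inr ⟨⌊(p:ℝ)*phi⌋₊, ⌊(q:ℝ)*phi⌋₊, ⟨p, hp1, rfl⟩, ⟨q, hq1, rfl⟩,
      le_trans hma (floor_mono' hip), le_trans hmb (floor_mono' hjq), hwv⟩

lemma three (m a b c : ℕ) (ha : IsLowerWythoff a) (hb : IsLowerWythoff b)
    (hc : IsLowerWythoff c) (hma : m ≤ a) (hmb : m ≤ b) (hmc : m ≤ c) :
    (∃ w, IsLowerWythoff w ∧ m ≤ w ∧ a + b + c = w) ∨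
    (∃ w v, IsLowerWythoff w ∧ IsLowerWythoff v ∧ m ≤ w ∧ m ≤ v ∧ a + b + c = w + v) := by
  obtain ⟨i, hi, rfl⟩ := ha
  obtain ⟨j, hj, rfl⟩ := hb
  obtain ⟨k, hk, rfl⟩ := hc
  rcases le_total i j with h1 | h1 <;> rcases le_total j k with h2 | h2 <;>
    rcases le_total i k with h3 | h3
  · exact core m _ i j k hi h1 h2 hma hmb hmc (by omega)
  · exact core m _ i j k hi h1 h2 hma hmb hmc (by omega)
  · exact core m _ i k j hi h3 h2 hma hmc hmb (by omega)
  · exact core m _ k i j hk h3 h1 hmc hma hmb (by omega)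
  · exact core m _ j i k hj h1 h3 hmb hma hmc (by omega)
  · exact core m _ j k i hj h2 h3 hmb hmc hma (by omega)
  · exact core m _ k j i hk h2 h1 hmc hmb hma (by omega)
  · exact core m _ k j i hk h2 h1 hmc hmb hma (by omega)
lemma combine (m x y : ℕ)
    (hx : x = 0 ∨ (∃ a, IsLowerWythoff a ∧ m ≤ a ∧ x = a) ∨
      (∃ a b, IsLowerWythoff a ∧ IsLowerWythoff b ∧ m ≤ a ∧ m ≤ b ∧ x = a + b))
    (hy : y = 0 ∨ (∃ a, IsLowerWythoff a ∧ m ≤ a ∧ y = a) ∨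
      (∃ a b, IsLowerWythoff a ∧ IsLowerWythoff b ∧ m ≤ a ∧ m ≤ b ∧ y = a + b)) :
    x + y = 0 ∨ (∃ a, IsLowerWythoff a ∧ m ≤ a ∧ x + y = a) ∨
      (∃ a b, IsLowerWythoff a ∧ IsLowerWythoff b ∧ m ≤ a ∧ m ≤ b ∧ x + y = a + b) := by
  rcases hx with hx0 | ⟨a, hwa, hma, hxe⟩ | ⟨a, b, hwa, hwb, hma, hmb, hxe⟩
  · subst hx0; simpa using hy
  · rcases hy with hy0 | ⟨c, hwc, hmc, hye⟩ | ⟨c, d, hwc, hwd, hmc, hmd, hye⟩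
    · exact Or.inr (Or.inl ⟨a, hwa, hma, by omega⟩)
    · exact Or.inr (Or.inr ⟨a, c, hwa, hwc, hma, hmc, by omega⟩)
    · rcases three m a c d hwa hwc hwd hma hmc hmd with
        ⟨w, h1, h2, h3⟩ | ⟨w, v, h1, h2, h3, h4, h5⟩
      · exact Or.inr (Or.inl ⟨w, h1, h2, by omega⟩)
      · exact Or.inr (Or.inr ⟨w, v, h1, h2, h3, h4, by omega⟩)
  · rcases hy with hy0 | ⟨c, hwc, hmc, hye⟩ | ⟨c, d, hwc, hwd, hmc, hmd, hye⟩
    · exact Or.inr (Or.inr ⟨a, b, hwa, hwb, hma, hmb, by omega⟩)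
    · rcases three m a b c hwa hwb hwc hma hmb hmc with
        ⟨w, h1, h2, h3⟩ | ⟨w, v, h1, h2, h3, h4, h5⟩
      · exact Or.inr (Or.inl ⟨w, h1, h2, by omega⟩)
      · exact Or.inr (Or.inr ⟨w, v, h1, h2, h3, h4, by omega⟩)
    · rcases three m a b c hwa hwb hwc hma hmb hmc with
        ⟨w, h1, h2, h3⟩ | ⟨w, v, h1, h2, h3, h4, h5⟩
      · exact Or.inr (Or.inr ⟨w, d, h1, hwd, h2, hmd, by omega⟩)
      · rcases three m w v d h1 h2 hwd h3 h4 hmd with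
          ⟨u, g1, g2, g3⟩ | ⟨u, t, g1, g2, g3, g4, g5⟩
        · exact Or.inr (Or.inl ⟨u, g1, g2, by omega⟩)
        · exact Or.inr (Or.inr ⟨u, t, g1, g2, g3, g4, by omega⟩)

theorem lower_wythoff_combination_to_two (m n : ℕ) (hn : 1 ≤ n)
    (h : n ∈ AddSubmonoid.closure {k : ℕ | IsLowerWythoff k ∧ m ≤ k}) :
    (∃ a : ℕ, IsLowerWythoff a ∧ m ≤ a ∧ n = a) ∨
    (∃ a b : ℕ, IsLowerWythoff a ∧ IsLowerWythoff b ∧ m ≤ a ∧ m ≤ b ∧ n = a + b) := by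
  have H : n = 0 ∨ (∃ a, IsLowerWythoff a ∧ m ≤ a ∧ n = a) ∨
      (∃ a b, IsLowerWythoff a ∧ IsLowerWythoff b ∧ m ≤ a ∧ m ≤ b ∧ n = a + b) := by
    refine AddSubmonoid.closure_induction
      (motive := fun x _ => x = 0 ∨ (∃ a, IsLowerWythoff a ∧ m ≤ a ∧ x = a) ∨
        (∃ a b, IsLowerWythoff a ∧ IsLowerWythoff b ∧ m ≤ a ∧ m ≤ b ∧ x = a + b))
      (fun x hx => Or.inr (Or.inl ⟨x, hx.1, hx.2, rfl⟩)) (Or.inl rfl)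
      (fun x y _ _ hx hy => combine m x y hx hy) h
  rcases H with rfl | H | H
  · omega
  · exact Or.inl H
  · exact Or.inr H
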